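/- Fix μ₁ < μ₂ ∈ ℝ, π ∈ (0,1) and x ∈ ℝ with x > (μ₁+μ₂)/2. Writing p_σ(x) = π φ_{μ₁,σ}(x) + (1−π) φ_{μ₂,σ}(x), one has s_{p_σ}(x) + (x−μ₂)/σ² → 0 as σ → 0⁺; that is, the mixture score converges to the score of the right Gaussian component. -/

import Mathlib

open MeasureTheory Filter

/-- Gaussian density with mean `μ` and standard deviation `σ`. -/
noncomputable def gaussian (μ σ : ℝ) (x : ℝ) : ℝ :=
  (σ * Real.sqrt (2 * Real.pi))⁻¹ * Real.exp (-(x - μ) ^ 2 / (2 * σ ^ 2))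

/-- The score of a density `ρ`: the derivative of its log. -/
noncomputable def score (ρ : ℝ → ℝ) (x : ℝ) : ℝ :=
  deriv (fun y => Real.log (ρ y)) x

/-- Fisher divergence between densities `q` and `p`. -/
noncomputable def fisherDiv (q p : ℝ → ℝ) : ℝ :=
  ∫ x : ℝ, q x * (score q x - score p x) ^ 2

lemma gaussian_pos {μ σ : ℝ} (hσ : 0 < σ) (x : ℝ) : 0 < gaussian μ σ x := by
  unfold gaussian
  have h2π : 0 < 2 * Real.pi := by positivity
  have := Real.sqrt_pos.mpr h2π
  positivity

lemma hasDerivAt_gaussian (μ σ x : ℝ) (hσ : σ ≠ 0) :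
    HasDerivAt (gaussian μ σ) (gaussian μ σ x * (-(x - μ) / σ ^ 2)) x := by
  have h2 : HasDerivAt (fun y : ℝ => (y - μ) ^ 2) (2 * (x - μ)) x := by
    simpa using ((hasDerivAt_id x).sub_const μ).fun_pow 2
  have h1 : HasDerivAt (fun y : ℝ => -(y - μ) ^ 2 / (2 * σ ^ 2))
      (-(x - μ) / σ ^ 2) x := by
    have := (h2.neg).div_const (2 * σ ^ 2)
    refine this.congr_deriv ?_
    field_simp
  have h4 := (h1.exp).const_mul ((σ * Real.sqrt (2 * Real.pi))⁻¹)
  unfold gaussian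
  refine h4.congr_deriv ?_
  ring

lemma gaussian_ratio (μ₁ μ₂ σ x : ℝ) (hσ : σ ≠ 0) :
    gaussian μ₁ σ x = gaussian μ₂ σ x *
      Real.exp (-((μ₂ - μ₁) * (2 * x - μ₁ - μ₂) / 2 / σ ^ 2)) := by
  unfold gaussian
  rw [mul_assoc, ← Real.exp_add]
  congr 2
  field_simp
  ring

lemma key_alg (μ₁ μ₂ x w G E c σ : ℝ) (hG : G ≠ 0) (hσ : σ ≠ 0) (hc : c ≠ 0)
    (hden : w * E + (1 - w) ≠ 0) :
    (w * (G * E * (-(x - μ₁) / σ ^ 2)) + (1 - w) * (G * (-(x - μ₂) / σ ^ 2)))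
        / (w * (G * E) + (1 - w) * G) + (x - μ₂) / σ ^ 2
      = w * (μ₁ - μ₂) * c⁻¹ * (c / σ ^ 2 * E * (w * E + (1 - w))⁻¹) := by
  have hd2 : w * (G * E) + (1 - w) * G ≠ 0 := by
    have h : w * (G * E) + (1 - w) * G = G * (w * E + (1 - w)) := by ring
    rw [h]
    exact mul_ne_zero hG hden
  field_simp
  ring

/-- right of the midpoint, as `σ → 0⁺` the mixture score converges to
the score of the right Gaussian component. -/
theorem mixture_score_right_of_midpoint (μ₁ μ₂ w : ℝ) (hμ : μ₁ < μ₂)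
    (hw : w ∈ Set.Ioo (0 : ℝ) 1) (x : ℝ) (hx : x > (μ₁ + μ₂) / 2) :
    Tendsto
      (fun σ => score (fun y => w * gaussian μ₁ σ y + (1 - w) * gaussian μ₂ σ y) x
        + (x - μ₂) / σ ^ 2)
      (nhdsWithin 0 (Set.Ioi 0)) (nhds 0) := by
  obtain ⟨hw0, hw1⟩ := hw
  set c : ℝ := (μ₂ - μ₁) * (2 * x - μ₁ - μ₂) / 2 with hc_def
  have hc : 0 < c := by
    apply div_pos _ two_pos
    apply mul_pos (by linarith)
    linarith
  set F : ℝ → ℝ := fun σ => (w * (μ₁ - μ₂) * c⁻¹) *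
    (((c / σ ^ 2) * Real.exp (-(c / σ ^ 2))) *
      (w * Real.exp (-(c / σ ^ 2)) + (1 - w))⁻¹) with hF_def
  have heq : (fun σ => score (fun y => w * gaussian μ₁ σ y + (1 - w) * gaussian μ₂ σ y) x
        + (x - μ₂) / σ ^ 2) =ᶠ[nhdsWithin 0 (Set.Ioi 0)] F := by
    filter_upwards [self_mem_nhdsWithin] with σ hσ
    have hσ0 : (0:ℝ) < σ := hσ
    have hσne : σ ≠ 0 := ne_of_gt hσ0
    have hE : (0:ℝ) < Real.exp (-(c / σ ^ 2)) := Real.exp_pos _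
    have hg2 : 0 < gaussian μ₂ σ x := gaussian_pos hσ0 x
    have hrat : gaussian μ₁ σ x = gaussian μ₂ σ x * Real.exp (-(c / σ ^ 2)) :=
      gaussian_ratio μ₁ μ₂ σ x hσne
    have hden : w * Real.exp (-(c / σ ^ 2)) + (1 - w) ≠ 0 := by nlinarith
    have hp : HasDerivAt (fun y => w * gaussian μ₁ σ y + (1 - w) * gaussian μ₂ σ y)
        (w * (gaussian μ₁ σ x * (-(x - μ₁) / σ ^ 2))
          + (1 - w) * (gaussian μ₂ σ x * (-(x - μ₂) / σ ^ 2))) x :=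
      ((hasDerivAt_gaussian μ₁ σ x hσne).const_mul w).add
        ((hasDerivAt_gaussian μ₂ σ x hσne).const_mul (1 - w))
    have hpx : w * gaussian μ₁ σ x + (1 - w) * gaussian μ₂ σ x ≠ 0 := by
      have h1 : 0 < gaussian μ₁ σ x := gaussian_pos hσ0 x
      have : 0 < w * gaussian μ₁ σ x + (1 - w) * gaussian μ₂ σ x := by
        have hw1' : 0 < 1 - w := by linarith
        positivity
      exact ne_of_gt this
    have hscore : score (fun y => w * gaussian μ₁ σ y + (1 - w) * gaussian μ₂ σ y) x
        = (w * (gaussian μ₁ σ x * (-(x - μ₁) / σ ^ 2))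
          + (1 - w) * (gaussian μ₂ σ x * (-(x - μ₂) / σ ^ 2)))
          / (w * gaussian μ₁ σ x + (1 - w) * gaussian μ₂ σ x) :=
      (hp.log hpx).deriv
    rw [hscore, hrat, hF_def]
    exact key_alg μ₁ μ₂ x w (gaussian μ₂ σ x) (Real.exp (-(c / σ ^ 2))) c σ
      (ne_of_gt hg2) hσne (ne_of_gt hc) hden
  refine Tendsto.congr' heq.symm ?_
  have hsq : Tendsto (fun σ : ℝ => σ ^ 2) (nhdsWithin 0 (Set.Ioi 0))
      (nhdsWithin 0 (Set.Ioi 0)) := by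
    rw [tendsto_nhdsWithin_iff]
    constructor
    · have h : Tendsto (fun σ : ℝ => σ ^ 2) (nhds 0) (nhds 0) := by
        simpa using (continuous_pow 2).tendsto (0:ℝ)
      exact h.mono_left nhdsWithin_le_nhds
    · filter_upwards [self_mem_nhdsWithin] with σ hσ
      exact pow_pos (show (0:ℝ) < σ from hσ) 2
  have hT : Tendsto (fun σ : ℝ => c / σ ^ 2) (nhdsWithin 0 (Set.Ioi 0)) atTop := by
    have h := (tendsto_inv_nhdsGT_zero.comp hsq).const_mul_atTop hc
    simpa [div_eq_mul_inv, Function.comp_def] using h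
  have h2 : Tendsto (fun σ : ℝ => (c / σ ^ 2) * Real.exp (-(c / σ ^ 2)))
      (nhdsWithin 0 (Set.Ioi 0)) (nhds 0) := by
    have h := (Real.tendsto_pow_mul_exp_neg_atTop_nhds_zero 1).comp hT
    simpa [Function.comp_def] using h
  have hneg : Tendsto (fun σ : ℝ => -(c / σ ^ 2)) (nhdsWithin 0 (Set.Ioi 0)) atBot :=
    tendsto_neg_atBot_iff.mpr hT
  have hE0 : Tendsto (fun σ : ℝ => Real.exp (-(c / σ ^ 2)))
      (nhdsWithin 0 (Set.Ioi 0)) (nhds 0) := by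
    simpa [Function.comp_def] using Real.tendsto_exp_atBot.comp hneg
  have h3 : Tendsto (fun σ : ℝ => (w * Real.exp (-(c / σ ^ 2)) + (1 - w))⁻¹)
      (nhdsWithin 0 (Set.Ioi 0)) (nhds (1 - w)⁻¹) := by
    have hden : Tendsto (fun σ : ℝ => w * Real.exp (-(c / σ ^ 2)) + (1 - w))
        (nhdsWithin 0 (Set.Ioi 0)) (nhds (1 - w)) := by
      have h := (hE0.const_mul w).add_const (1 - w)
      simpa using h
    exact hden.inv₀ (by linarith)
  have hfin := (tendsto_const_nhds (x := w * (μ₁ - μ₂) * c⁻¹)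
      (f := nhdsWithin (0:ℝ) (Set.Ioi 0))).mul (h2.mul h3)
  simpa [hF_def] using hfin
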